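/- The graded ℤ-module T_• equipped with the symmetrized product ∗̂ is a graded associative unital algebra, with unit the empty set composition ∅ ∈ Comp_0; in particular (P ∗̂ Q) ∗̂ R = P ∗̂ (Q ∗̂ R) for all set compositions P, Q, R. -/

import Mathlib

set_option linter.unreachableTactic false
set_option linter.unusedTactic false
set_option maxHeartbeats 1000000


open Finset

/-- Candidate set compositions: lists of finite sets of positive naturals. -/
abbrev SC : Type := List (Finset ℕ)

/-- The underlying (ground) set of a list of blocks. -/
def ground (L : SC) : Finset ℕ := L.foldr (· ∪ ·) ∅

/-- `L` is a set composition of `[n] = {1,…,n}`. -/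
def IsSetComp (n : ℕ) (L : SC) : Prop :=
  (∀ B ∈ L, B.Nonempty) ∧ L.Pairwise Disjoint ∧ ground L = Finset.Icc 1 n

/-- The degree of a set composition (largest element of its ground set). -/
def maxG (L : SC) : ℕ := (ground L).sup id

/-- The 1-based rank of `x` inside the finite set `A` (the position of `x` in the
increasing enumeration of `A`, when `x ∈ A`); this is the order preserving
relabelling `A → [|A|]`. -/
def rankIn (A : Finset ℕ) (x : ℕ) : ℕ := (A.filter (· ≤ x)).card

/-- `P|_A` : intersect the blocks with `A`, delete the empty intersections, and
relabel along the order preserving bijection `A → [|A|]`. -/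
def restrictSC (A : Finset ℕ) (L : SC) : SC :=
  (L.map fun B => (B ∩ A).image (rankIn A)).filter fun B => decide B.Nonempty

/-- Shift all entries of all blocks by `p`. -/
def shiftSC (p : ℕ) (L : SC) : SC := L.map (Finset.image (· + p))

/-- The restricted product `∗̄` on set compositions:
`P ∗̄ Q = (P₁,…,P_k, p+Q₁,…,p+Q_l)` for `P ∈ Comp_p`. -/
def barMul (P Q : SC) : SC := P ++ shiftSC (maxG P) Q

/-- The order-preserving relabelling map `S → T` (`is_{S,T}`), for finite sets
of equal cardinality. -/
def relabelFun (S T : Finset ℕ) (x : ℕ) : ℕ := (T.sort (· ≤ ·)).getD (rankIn S x - 1) 0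

/-- Relabel a set composition of `S` along the order-preserving bijection `S → T`. -/
def relabelSC (S T : Finset ℕ) (L : SC) : SC := L.map (Finset.image (relabelFun S T))

variable (R : Type) [CommRing R]

/-- The free module with basis indexed by lists of blocks; the twisted descent
algebra `T_•` is its submodule spanned by the set compositions. -/
abbrev FM := SC →₀ R

/-- `T_•` as a submodule: the span of the set compositions. -/
noncomputable def Tspan : Submodule R (FM R) :=
  Submodule.span R {f : FM R | ∃ n P, IsSetComp n P ∧ f = Finsupp.single P 1}

/-- The restricted product `∗̄` as a bilinear map. -/
noncomputable def barL : FM R →ₗ[R] FM R →ₗ[R] FM R :=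
  Finsupp.lift _ R SC fun P => Finsupp.lift _ R SC fun Q => Finsupp.single (barMul P Q) 1

/-- The symmetrized product `∗̂` on basis elements:
`P ∗̂ Q = Σ is_{[p],A}(P) ∗ is_{[q],B}(Q)` over all `A ⊔ B = [p+q]`, `|A| = p`. -/
noncomputable def hatB (P Q : SC) : FM R :=
  ∑ A ∈ (Finset.Icc 1 (maxG P + maxG Q)).powerset.filter (fun A => A.card = maxG P),
    Finsupp.single
      (relabelSC (Finset.Icc 1 (maxG P)) A P ++
        relabelSC (Finset.Icc 1 (maxG Q)) ((Finset.Icc 1 (maxG P + maxG Q)) \ A) Q) 1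

/-- The symmetrized product `∗̂` as a bilinear map. -/
noncomputable def hatL : FM R →ₗ[R] FM R →ₗ[R] FM R :=
  Finsupp.lift _ R SC fun P => Finsupp.lift _ R SC fun Q => hatB R P Q

/-- `T_• ⊗ T_•`, realized as the free module on pairs of basis elements. -/
abbrev FM2 := (SC × SC) →₀ R

/-- `T_• ⊗ T_• ⊗ T_•`, realized as the free module on triples of basis elements. -/
abbrev FM3 := (SC × SC × SC) →₀ R

/-- The restricted coproduct `δ̄ (P) = Σ_{p=0}^n P|_{[p]} ⊗ P|_{{p+1,…,n}}`. -/
noncomputable def dBarL : FM R →ₗ[R] FM2 R :=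
  Finsupp.lift _ R SC fun P =>
    ∑ p ∈ Finset.range (maxG P + 1),
      Finsupp.single
        (restrictSC (Finset.Icc 1 p) P, restrictSC (Finset.Icc (p+1) (maxG P)) P) 1

/-- The cosymmetrized coproduct `δ̂ (P) = Σ_{A ⊔ B = [n]} P|_A ⊗ P|_B`. -/
noncomputable def dHatL : FM R →ₗ[R] FM2 R :=
  Finsupp.lift _ R SC fun P =>
    ∑ A ∈ (Finset.Icc 1 (maxG P)).powerset,
      Finsupp.single (restrictSC A P, restrictSC ((Finset.Icc 1 (maxG P)) \ A) P) 1

/-- Apply a coproduct to the first tensor factor:  `d ⊗ id : T⊗T → T⊗T⊗T`. -/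
noncomputable def applyFst (d : FM R →ₗ[R] FM2 R) : FM2 R →ₗ[R] FM3 R :=
  Finsupp.lift _ R (SC × SC) fun PQ =>
    Finsupp.mapDomain (fun RS : SC × SC => (RS.1, RS.2, PQ.2)) (d (Finsupp.single PQ.1 1))

/-- Apply a coproduct to the second tensor factor:  `id ⊗ d : T⊗T → T⊗T⊗T`. -/
noncomputable def applySnd (d : FM R →ₗ[R] FM2 R) : FM2 R →ₗ[R] FM3 R :=
  Finsupp.lift _ R (SC × SC) fun PQ =>
    Finsupp.mapDomain (fun RS : SC × SC => (PQ.1, RS.1, RS.2)) (d (Finsupp.single PQ.2 1))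

/-- `ε ⊗ id : T⊗T → T`, where `ε` is the projection onto `T_0 ≅ R`
(the coefficient of the empty set composition). -/
noncomputable def epsFst : FM2 R →ₗ[R] FM R :=
  Finsupp.lift _ R (SC × SC) fun PQ =>
    if PQ.1 = ([] : SC) then Finsupp.single PQ.2 1 else 0

/-- `id ⊗ ε : T⊗T → T`. -/
noncomputable def epsSnd : FM2 R →ₗ[R] FM R :=
  Finsupp.lift _ R (SC × SC) fun PQ =>
    if PQ.2 = ([] : SC) then Finsupp.single PQ.1 1 else 0

/-- The twist map `x ⊗ y ↦ y ⊗ x` on `T_• ⊗ T_•`. -/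
noncomputable def twistL : FM2 R →ₗ[R] FM2 R :=
  Finsupp.lift _ R (SC × SC) fun PQ => Finsupp.single (PQ.2, PQ.1) 1

/-- The counit: projection onto the degree-0 component `T_0 ≅ R`. -/
noncomputable def counitL : FM R →ₗ[R] R :=
  Finsupp.lift _ R SC fun P => if P = ([] : SC) then 1 else 0

-- ### rank lemmas
lemma rankIn_pos {S : Finset ℕ} {x : ℕ} (hx : x ∈ S) : 1 ≤ rankIn S x := by
  have : x ∈ S.filter (· ≤ x) := by simp [hx]
  exact Finset.card_pos.2 ⟨x, this⟩

lemma rankIn_le {S : Finset ℕ} (x : ℕ) : rankIn S x ≤ S.card :=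
  Finset.card_filter_le _ _

lemma rankIn_strictMonoOn (S : Finset ℕ) : StrictMonoOn (rankIn S) S := by
  intro x hx y hy hxy
  apply Finset.card_lt_card
  constructor
  · intro z hz
    simp only [Finset.mem_filter] at hz ⊢
    exact ⟨hz.1, hz.2.trans hxy.le⟩
  · intro h
    have : y ∈ S.filter (· ≤ x) := h (by simp; exact Finset.mem_coe.1 hy)
    simp only [Finset.mem_filter] at this
    omega

-- strictly sorted list getD mono
lemma sort_getD_lt {T : Finset ℕ} {i j : ℕ} (hij : i < j) (hj : j < (T.sort (· ≤ ·)).length) :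
    (T.sort (· ≤ ·)).getD i 0 < (T.sort (· ≤ ·)).getD j 0 := by
  have hs := List.sortedLT_iff_pairwise.1 (Finset.sortedLT_sort T)
  rw [List.getD_eq_getElem _ _ (hij.trans hj), List.getD_eq_getElem _ _ hj]
  exact List.pairwise_iff_get.1 hs ⟨i, hij.trans hj⟩ ⟨j, hj⟩ hij

lemma relabelFun_strictMonoOn {S T : Finset ℕ} (hc : S.card = T.card) :
    StrictMonoOn (relabelFun S T) S := by
  intro x hx y hy hxy
  unfold relabelFun
  apply sort_getD_lt
  · have h1 := rankIn_pos hx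
    have h2 := rankIn_strictMonoOn S hx hy hxy
    omega
  · have := rankIn_le (S := S) y
    have h1 := rankIn_pos hy
    rw [Finset.length_sort]
    omega

lemma relabelFun_mem {S T : Finset ℕ} (hc : S.card = T.card) {x : ℕ} (hx : x ∈ S) :
    relabelFun S T x ∈ T := by
  unfold relabelFun
  have h1 := rankIn_pos hx
  have h2 := rankIn_le (S := S) x
  have hlen : rankIn S x - 1 < (T.sort (· ≤ ·)).length := by
    rw [Finset.length_sort]; omega
  rw [List.getD_eq_getElem _ _ hlen]
  exact (Finset.mem_sort _).1 (List.getElem_mem _)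

lemma relabelFun_image {S T : Finset ℕ} (hc : S.card = T.card) :
    S.image (relabelFun S T) = T := by
  apply Finset.eq_of_subset_of_card_le
  · intro y hy
    obtain ⟨x, hx, rfl⟩ := Finset.mem_image.1 hy
    exact relabelFun_mem hc hx
  · rw [Finset.card_image_of_injOn ((relabelFun_strictMonoOn hc).injOn)]
    omega

-- sorted map lemma
lemma map_sort_eq {S : Finset ℕ} {f : ℕ → ℕ} (hf : StrictMonoOn f S) :
    (S.sort (· ≤ ·)).map f = (S.image f).sort (· ≤ ·) := by
  refine (fun hp h1 h2 => List.Perm.eq_of_pairwise' (r := (· < ·)) h1 h2 hp) ?_ ?_ ?_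
  · apply List.perm_of_nodup_nodup_toFinset_eq
    · exact (S.sort_nodup _).map_on (fun x hx y hy h =>
        hf.injOn ((Finset.mem_sort _).1 hx) ((Finset.mem_sort _).1 hy) h)
    · exact Finset.sort_nodup _ _
    · ext z
      simp [List.mem_toFinset, List.mem_map, Finset.mem_sort, Finset.mem_image]
  · rw [List.pairwise_map]
    exact (List.sortedLT_iff_pairwise.1 (Finset.sortedLT_sort S)).imp_of_mem (fun {a b} ha hb h =>
      hf ((Finset.mem_sort _).1 ha) ((Finset.mem_sort _).1 hb) h)
  · exact List.sortedLT_iff_pairwise.1 (Finset.sortedLT_sort _)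

-- uniqueness of order-preserving relabelling
lemma strictMonoOn_eq_of_image_eq {S : Finset ℕ} {f g : ℕ → ℕ}
    (hf : StrictMonoOn f S) (hg : StrictMonoOn g S)
    (him : S.image f = S.image g) : ∀ x ∈ S, f x = g x := by
  have hl : (S.sort (· ≤ ·)).map f = (S.sort (· ≤ ·)).map g := by
    rw [map_sort_eq hf, map_sort_eq hg, him]
  intro x hx
  obtain ⟨i, hi⟩ := List.mem_iff_get.1 ((Finset.mem_sort (α := ℕ) (· ≤ ·)).2 hx)
  have h1 : ((S.sort (· ≤ ·)).map f)[i.1]'(by simpa using i.2)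
      = ((S.sort (· ≤ ·)).map g)[i.1]'(by simpa using i.2) := by simp only [hl]
  simp only [List.get_eq_getElem] at hi
  simpa [List.getElem_map, hi] using h1

lemma eq_relabelFun {S T : Finset ℕ} {f : ℕ → ℕ} (hf : StrictMonoOn f S)
    (him : S.image f = T) : ∀ x ∈ S, f x = relabelFun S T x := by
  have hc : S.card = T.card := by
    rw [← him, Finset.card_image_of_injOn hf.injOn]
  exact strictMonoOn_eq_of_image_eq hf (relabelFun_strictMonoOn hc)
    (him.trans (relabelFun_image hc).symm)

lemma relabelFun_self {S : Finset ℕ} {x : ℕ} (hx : x ∈ S) : relabelFun S S x = x :=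
  (eq_relabelFun (f := id) (fun _ _ _ _ h => h) (Finset.image_id) x hx).symm

lemma relabelFun_comp {S A T C : Finset ℕ} (hSA : S.card = A.card) (hTC : T.card = C.card)
    (hA : A ⊆ T) {x : ℕ} (hx : x ∈ S) :
    relabelFun T C (relabelFun S A x) = relabelFun S (A.image (relabelFun T C)) x := by
  have hmono : StrictMonoOn (fun y => relabelFun T C (relabelFun S A y)) S := by
    intro a ha b hb hab
    exact relabelFun_strictMonoOn hTC (hA (relabelFun_mem hSA ha))
      (hA (relabelFun_mem hSA hb)) (relabelFun_strictMonoOn hSA ha hb hab)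
  have him : S.image (fun y => relabelFun T C (relabelFun S A y))
      = A.image (relabelFun T C) := by
    calc S.image (fun y => relabelFun T C (relabelFun S A y))
        = (S.image (relabelFun S A)).image (relabelFun T C) := by rw [Finset.image_image]; rfl
      _ = A.image (relabelFun T C) := by rw [relabelFun_image hSA]
  exact eq_relabelFun hmono him x hx

lemma relabelFun_inv {T C : Finset ℕ} (hTC : T.card = C.card) {x : ℕ} (hx : x ∈ T) :
    relabelFun C T (relabelFun T C x) = x := by
  have h := relabelFun_comp (S := T) (A := C) (T := C) (C := T) hTC hTC.symm
    (Finset.Subset.refl C) hx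
  have him : C.image (relabelFun C T) = T := relabelFun_image hTC.symm
  rw [h, him, relabelFun_self hx]

-- ### ground lemmas
lemma ground_nil : ground [] = ∅ := rfl
lemma ground_cons (B : Finset ℕ) (L : SC) : ground (B :: L) = B ∪ ground L := rfl

lemma ground_append (L1 L2 : SC) : ground (L1 ++ L2) = ground L1 ∪ ground L2 := by
  induction L1 with
  | nil => simp [ground_nil, ground_cons, ground]
  | cons B L ih => simp [ground_cons, ih, Finset.union_assoc]

lemma subset_ground {L : SC} {B : Finset ℕ} (hB : B ∈ L) : B ⊆ ground L := by
  induction L with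
  | nil => simp at hB
  | cons C L ih =>
    rcases List.mem_cons.1 hB with rfl | h
    · exact Finset.subset_union_left
    · exact (ih h).trans Finset.subset_union_right

lemma ground_map_image (f : ℕ → ℕ) (L : SC) :
    ground (L.map (Finset.image f)) = (ground L).image f := by
  induction L with
  | nil => simp [ground_nil]
  | cons B L ih => simp [ground_cons, ih, Finset.image_union]

lemma ground_relabelSC (S T : Finset ℕ) (L : SC) :
    ground (relabelSC S T L) = (ground L).image (relabelFun S T) :=
  ground_map_image _ _

lemma sup_Icc (n : ℕ) : (Finset.Icc 1 n).sup id = n := by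
  apply le_antisymm
  · exact Finset.sup_le (fun x hx => by simpa using (Finset.mem_Icc.1 hx).2)
  · cases n with
    | zero => simp
    | succ m => exact Finset.le_sup (f := id) (Finset.mem_Icc.2 ⟨by omega, le_refl _⟩)

lemma maxG_of_ground {L : SC} {n : ℕ} (h : ground L = Finset.Icc 1 n) : maxG L = n := by
  rw [maxG, h, sup_Icc]

-- ### relabelSC structural lemmas
lemma relabelSC_append (S T : Finset ℕ) (L1 L2 : SC) :
    relabelSC S T (L1 ++ L2) = relabelSC S T L1 ++ relabelSC S T L2 :=
  List.map_append

lemma relabelSC_comp {S A T C : Finset ℕ} (hSA : S.card = A.card) (hTC : T.card = C.card)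
    (hA : A ⊆ T) {L : SC} (hL : ∀ B ∈ L, B ⊆ S) :
    relabelSC T C (relabelSC S A L) = relabelSC S (A.image (relabelFun T C)) L := by
  unfold relabelSC
  rw [List.map_map]
  apply List.map_congr_left
  intro B hB
  simp only [Function.comp_apply, Finset.image_image]
  apply Finset.image_congr
  intro x hx
  exact relabelFun_comp hSA hTC hA (hL B hB hx)

lemma relabelSC_self {S : Finset ℕ} {L : SC} (hL : ∀ B ∈ L, B ⊆ S) :
    relabelSC S S L = L := by
  unfold relabelSC
  conv_rhs => rw [← List.map_id L]
  apply List.map_congr_left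
  intro B hB
  simp only [id]
  conv_rhs => rw [← Finset.image_id (s := B)]
  apply Finset.image_congr
  intro x hx
  exact relabelFun_self (hL B hB hx)

-- injOn image of sdiff
lemma image_sdiff_of_injOn {f : ℕ → ℕ} {s t : Finset ℕ} (hs : s ⊆ t)
    (hf : Set.InjOn f t) : (t \ s).image f = t.image f \ s.image f := by
  ext y
  simp only [Finset.mem_image, Finset.mem_sdiff]
  constructor
  · rintro ⟨x, hx, rfl⟩
    exact ⟨⟨x, hx.1, rfl⟩, fun ⟨z, hz, hzy⟩ => hx.2 (hf (hs hz) hx.1 hzy ▸ hz)⟩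
  · rintro ⟨⟨x, hx, rfl⟩, hne⟩
    exact ⟨x, ⟨hx, fun hxs => hne ⟨x, hxs, rfl⟩⟩, rfl⟩

-- ### IsComp
def IsComp (S : Finset ℕ) (L : SC) : Prop :=
  (∀ B ∈ L, B.Nonempty) ∧ L.Pairwise Disjoint ∧ ground L = S

lemma isSetComp_iff {n : ℕ} {L : SC} : IsSetComp n L ↔ IsComp (Finset.Icc 1 n) L :=
  Iff.rfl

lemma IsComp.relabel {S T : Finset ℕ} {L : SC} (h : IsComp S L) (hc : S.card = T.card) :
    IsComp T (relabelSC S T L) := by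
  obtain ⟨hne, hdisj, hg⟩ := h
  have hsub : ∀ B ∈ L, B ⊆ S := fun B hB => hg ▸ subset_ground hB
  have hinj : Set.InjOn (relabelFun S T) S := (relabelFun_strictMonoOn hc).injOn
  refine ⟨?_, ?_, ?_⟩
  · intro B hB
    obtain ⟨B', hB', rfl⟩ := List.mem_map.1 hB
    exact (hne B' hB').image _
  · unfold relabelSC
    rw [List.pairwise_map]
    apply hdisj.imp_of_mem
    intro B1 B2 h1 h2 hd
    rw [Finset.disjoint_left] at hd ⊢
    rintro a ha1 ha2
    obtain ⟨x, hx, rfl⟩ := Finset.mem_image.1 ha1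
    obtain ⟨y, hy, hyx⟩ := Finset.mem_image.1 ha2
    have : y = x := hinj (hsub B2 h2 hy) (hsub B1 h1 hx) hyx
    exact hd hx (this ▸ hy)
  · rw [ground_relabelSC, hg, relabelFun_image hc]

lemma IsComp.append {S T : Finset ℕ} {L1 L2 : SC} (h1 : IsComp S L1) (h2 : IsComp T L2)
    (hST : Disjoint S T) : IsComp (S ∪ T) (L1 ++ L2) := by
  obtain ⟨hne1, hd1, hg1⟩ := h1
  obtain ⟨hne2, hd2, hg2⟩ := h2
  refine ⟨?_, ?_, ?_⟩
  · intro B hB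
    rcases List.mem_append.1 hB with h | h
    · exact hne1 B h
    · exact hne2 B h
  · rw [List.pairwise_append]
    refine ⟨hd1, hd2, fun B1 hB1 B2 hB2 => ?_⟩
    exact Finset.disjoint_of_subset_left (hg1 ▸ subset_ground hB1)
      (Finset.disjoint_of_subset_right (hg2 ▸ subset_ground hB2) hST)
  · rw [ground_append, hg1, hg2]


section Pieces
lemma hatL_single (P Q : SC) :
    hatL ℤ (Finsupp.single P 1) (Finsupp.single Q 1) = hatB ℤ P Q := by
  simp [hatL, Finsupp.lift_apply, Finsupp.sum_single_index]

lemma card_Icc_one (n : ℕ) : (Finset.Icc 1 n).card = n := by rw [Nat.card_Icc]; omega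

lemma hatB_term_isComp {p q : ℕ} {P Q : SC} (hP : IsSetComp p P) (hQ : IsSetComp q Q)
    {A : Finset ℕ} (hA : A ⊆ Finset.Icc 1 (p+q)) (hcard : A.card = p) :
    IsComp (Finset.Icc 1 (p+q))
      (relabelSC (Finset.Icc 1 p) A P ++
        relabelSC (Finset.Icc 1 q) (Finset.Icc 1 (p+q) \ A) Q) := by
  have h1 : IsComp A (relabelSC (Finset.Icc 1 p) A P) :=
    (isSetComp_iff.1 hP).relabel (by rw [card_Icc_one, hcard])
  have hc2 : (Finset.Icc 1 (p+q) \ A).card = q := by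
    rw [Finset.card_sdiff_of_subset hA, card_Icc_one, hcard]; omega
  have h2 : IsComp (Finset.Icc 1 (p+q) \ A) (relabelSC (Finset.Icc 1 q) (Finset.Icc 1 (p+q) \ A) Q) :=
    (isSetComp_iff.1 hQ).relabel (by rw [card_Icc_one, hc2])
  have h3 := h1.append h2 Finset.disjoint_sdiff
  rwa [Finset.union_sdiff_of_subset hA] at h3

lemma part1 (p q : ℕ) (P Q : SC) (hP : IsSetComp p P) (hQ : IsSetComp q Q) :
    hatL ℤ (Finsupp.single P 1) (Finsupp.single Q 1) ∈ Submodule.span ℤ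
      {f : FM ℤ | ∃ U : SC, IsSetComp (p + q) U ∧ f = Finsupp.single U 1} := by
  rw [hatL_single]
  unfold hatB
  rw [maxG_of_ground hP.2.2, maxG_of_ground hQ.2.2]
  apply Submodule.sum_mem
  intro A hA
  simp only [Finset.mem_filter, Finset.mem_powerset] at hA
  exact Submodule.subset_span ⟨_, hatB_term_isComp hP hQ hA.1 hA.2, rfl⟩
end Pieces


lemma maxG_nil : maxG ([] : SC) = 0 := by simp [maxG, ground]

lemma hatB_nil_left {q : ℕ} {Q : SC} (hQ : IsSetComp q Q) :
    hatB ℤ ([] : SC) Q = Finsupp.single Q 1 := by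
  have hmQ : maxG Q = q := maxG_of_ground hQ.2.2
  unfold hatB
  rw [maxG_nil, hmQ]
  have hidx : ((Finset.Icc 1 (0+q)).powerset.filter (fun A => A.card = 0)) = {∅} := by
    ext A
    simp only [Finset.mem_filter, Finset.mem_powerset, Finset.card_eq_zero,
      Finset.mem_singleton]
    exact ⟨fun h => h.2, fun h => ⟨h ▸ Finset.empty_subset _, h⟩⟩
  rw [hidx, Finset.sum_singleton, Finset.sdiff_empty, Nat.zero_add]
  have : relabelSC (Finset.Icc 1 q) (Finset.Icc 1 q) Q = Q :=
    relabelSC_self (fun B hB => hQ.2.2 ▸ subset_ground hB)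
  simp [relabelSC, this]
  rw [show (List.map (Finset.image (relabelFun (Finset.Icc 1 q) (Finset.Icc 1 q))) Q) =
    relabelSC (Finset.Icc 1 q) (Finset.Icc 1 q) Q from rfl, this]

lemma hatB_nil_right {q : ℕ} {Q : SC} (hQ : IsSetComp q Q) :
    hatB ℤ Q ([] : SC) = Finsupp.single Q 1 := by
  have hmQ : maxG Q = q := maxG_of_ground hQ.2.2
  unfold hatB
  rw [maxG_nil, hmQ]
  have hidx : ((Finset.Icc 1 (q+0)).powerset.filter (fun A => A.card = q)) = {Finset.Icc 1 q} := by
    ext A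
    simp only [Finset.mem_filter, Finset.mem_powerset, Finset.mem_singleton, Nat.add_zero]
    constructor
    · rintro ⟨hsub, hcard⟩
      exact Finset.eq_of_subset_of_card_le hsub (by rw [card_Icc_one, hcard])
    · rintro rfl
      exact ⟨Finset.Subset.refl _, card_Icc_one q⟩
  rw [hidx, Finset.sum_singleton]
  have : relabelSC (Finset.Icc 1 q) (Finset.Icc 1 q) Q = Q :=
    relabelSC_self (fun B hB => hQ.2.2 ▸ subset_ground hB)
  rw [show (relabelSC (Finset.Icc 1 q) (Finset.Icc 1 q) Q) = Q from this]
  simp [relabelSC]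


-- helpers for relabelled subsets
lemma relabel_image_subset {S T A : Finset ℕ} (hc : S.card = T.card) (hA : A ⊆ S) :
    A.image (relabelFun S T) ⊆ T := by
  intro y hy
  obtain ⟨x, hx, rfl⟩ := Finset.mem_image.1 hy
  exact relabelFun_mem hc (hA hx)

lemma relabel_image_card {S T A : Finset ℕ} (hc : S.card = T.card) (hA : A ⊆ S) :
    (A.image (relabelFun S T)).card = A.card :=
  Finset.card_image_of_injOn (((relabelFun_strictMonoOn hc).injOn).mono
    (Finset.coe_subset.2 hA))

lemma relabel_image_image_inv {S T A : Finset ℕ} (hc : S.card = T.card) (hA : A ⊆ S) :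
    (A.image (relabelFun S T)).image (relabelFun T S) = A := by
  rw [Finset.image_image]
  have : ∀ x ∈ A, (relabelFun T S ∘ relabelFun S T) x = id x := by
    intro x hx
    exact relabelFun_inv hc (hA hx)
  rw [Finset.image_congr this, Finset.image_id]

noncomputable def midF (p q r : ℕ) (P Q R' : SC) (z : Finset ℕ × Finset ℕ) : FM ℤ :=
  Finsupp.single (relabelSC (Finset.Icc 1 p) z.1 P ++
    (relabelSC (Finset.Icc 1 q) z.2 Q ++
      relabelSC (Finset.Icc 1 r) ((Finset.Icc 1 (p+q+r) \ z.1) \ z.2) R')) 1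

def midIdx (p q r : ℕ) : Finset (Finset ℕ × Finset ℕ) :=
  ((Finset.Icc 1 (p+q+r)).powerset ×ˢ (Finset.Icc 1 (p+q+r)).powerset).filter
    (fun z => z.1.card = p ∧ z.2.card = q ∧ Disjoint z.1 z.2)

lemma lhs_eq (p q r : ℕ) (P Q R' : SC) (hP : IsSetComp p P) (hQ : IsSetComp q Q)
    (hR : IsSetComp r R') :
    hatL ℤ (hatL ℤ (Finsupp.single P 1) (Finsupp.single Q 1)) (Finsupp.single R' 1)
      = ∑ z ∈ midIdx p q r, midF p q r P Q R' z := by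
  have hmP : maxG P = p := maxG_of_ground hP.2.2
  have hmQ : maxG Q = q := maxG_of_ground hQ.2.2
  have hmR : maxG R' = r := maxG_of_ground hR.2.2
  have hPsub : ∀ B ∈ P, B ⊆ Finset.Icc 1 p := fun B hB => hP.2.2 ▸ subset_ground hB
  have hQsub : ∀ B ∈ Q, B ⊆ Finset.Icc 1 q := fun B hB => hQ.2.2 ▸ subset_ground hB
  rw [hatL_single]
  unfold hatB
  rw [hmP, hmQ, map_sum, LinearMap.sum_apply]
  have step : ∀ A ∈ (Finset.Icc 1 (p+q)).powerset.filter (fun A => A.card = p),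
      (hatL ℤ (Finsupp.single (relabelSC (Finset.Icc 1 p) A P ++
          relabelSC (Finset.Icc 1 q) (Finset.Icc 1 (p+q) \ A) Q) 1)) (Finsupp.single R' 1)
      = ∑ C ∈ (Finset.Icc 1 (p+q+r)).powerset.filter (fun C => C.card = p+q),
          midF p q r P Q R'
            (A.image (relabelFun (Finset.Icc 1 (p+q)) C),
             C \ A.image (relabelFun (Finset.Icc 1 (p+q)) C)) := by
    intro A hA
    simp only [Finset.mem_filter, Finset.mem_powerset] at hA
    have hU := hatB_term_isComp hP hQ hA.1 hA.2
    have hmU := maxG_of_ground hU.2.2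
    rw [hatL_single]
    unfold hatB
    rw [hmU, hmR]
    apply Finset.sum_congr rfl
    intro C hC
    simp only [Finset.mem_filter, Finset.mem_powerset] at hC
    have hccard : (Finset.Icc 1 (p+q)).card = C.card := by rw [card_Icc_one, hC.2]
    have hinj := (relabelFun_strictMonoOn hccard).injOn
    have hA'C : A.image (relabelFun (Finset.Icc 1 (p+q)) C) ⊆ C :=
      relabel_image_subset hccard hA.1
    have h1 : relabelSC (Finset.Icc 1 (p+q)) C (relabelSC (Finset.Icc 1 p) A P)
        = relabelSC (Finset.Icc 1 p) (A.image (relabelFun (Finset.Icc 1 (p+q)) C)) P :=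
      relabelSC_comp (by rw [card_Icc_one, hA.2]) hccard hA.1 hPsub
    have h2 : relabelSC (Finset.Icc 1 (p+q)) C
          (relabelSC (Finset.Icc 1 q) (Finset.Icc 1 (p+q) \ A) Q)
        = relabelSC (Finset.Icc 1 q)
            ((Finset.Icc 1 (p+q) \ A).image (relabelFun (Finset.Icc 1 (p+q)) C)) Q :=
      relabelSC_comp (by rw [card_Icc_one, Finset.card_sdiff_of_subset hA.1, card_Icc_one, hA.2]; omega)
        hccard Finset.sdiff_subset hQsub
    have h3 : (Finset.Icc 1 (p+q) \ A).image (relabelFun (Finset.Icc 1 (p+q)) C)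
        = C \ A.image (relabelFun (Finset.Icc 1 (p+q)) C) := by
      rw [image_sdiff_of_injOn hA.1 hinj, relabelFun_image hccard]
    have h4 : Finset.Icc 1 (p+q+r) \ C
        = (Finset.Icc 1 (p+q+r) \ A.image (relabelFun (Finset.Icc 1 (p+q)) C))
            \ (C \ A.image (relabelFun (Finset.Icc 1 (p+q)) C)) := by
      rw [sdiff_sdiff_left, Finset.sup_eq_union, Finset.union_sdiff_of_subset hA'C]
    rw [relabelSC_append, h1, h2, h3, h4, midF, List.append_assoc]
  rw [Finset.sum_congr rfl step, ← Finset.sum_product']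
  apply Finset.sum_nbij'
    (i := fun z => (z.1.image (relabelFun (Finset.Icc 1 (p+q)) z.2),
                    z.2 \ z.1.image (relabelFun (Finset.Icc 1 (p+q)) z.2)))
    (j := fun z => (z.1.image (relabelFun (z.1 ∪ z.2) (Finset.Icc 1 (p+q))), z.1 ∪ z.2))
  · rintro ⟨A, C⟩ hz
    simp only [Finset.mem_product, Finset.mem_filter, Finset.mem_powerset] at hz
    obtain ⟨⟨hA1, hA2⟩, hC1, hC2⟩ := hz
    have hccard : (Finset.Icc 1 (p+q)).card = C.card := by rw [card_Icc_one, hC2]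
    have hsub : A.image (relabelFun (Finset.Icc 1 (p+q)) C) ⊆ C :=
      relabel_image_subset hccard hA1
    simp only [midIdx, Finset.mem_filter, Finset.mem_product, Finset.mem_powerset]
    refine ⟨⟨hsub.trans hC1, Finset.sdiff_subset.trans hC1⟩, ?_, ?_, Finset.disjoint_sdiff⟩
    · rw [relabel_image_card hccard hA1, hA2]
    · rw [Finset.card_sdiff_of_subset hsub, relabel_image_card hccard hA1, hC2, hA2]; omega
  · rintro ⟨A, B⟩ hz
    simp only [midIdx, Finset.mem_filter, Finset.mem_product, Finset.mem_powerset] at hz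
    obtain ⟨⟨hA1, hB1⟩, hA2, hB2, hdisj⟩ := hz
    have hucard : (A ∪ B).card = (Finset.Icc 1 (p+q)).card := by
      rw [Finset.card_union_of_disjoint hdisj, card_Icc_one, hA2, hB2]
    simp only [Finset.mem_product, Finset.mem_filter, Finset.mem_powerset]
    refine ⟨⟨relabel_image_subset hucard Finset.subset_union_left, ?_⟩,
      Finset.union_subset hA1 hB1, ?_⟩
    · rw [relabel_image_card hucard Finset.subset_union_left, hA2]
    · rw [Finset.card_union_of_disjoint hdisj, hA2, hB2]
  · rintro ⟨A, C⟩ hz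
    simp only [Finset.mem_product, Finset.mem_filter, Finset.mem_powerset] at hz
    obtain ⟨⟨hA1, hA2⟩, hC1, hC2⟩ := hz
    have hccard : (Finset.Icc 1 (p+q)).card = C.card := by rw [card_Icc_one, hC2]
    have hsub : A.image (relabelFun (Finset.Icc 1 (p+q)) C) ⊆ C :=
      relabel_image_subset hccard hA1
    have hCeq : A.image (relabelFun (Finset.Icc 1 (p+q)) C)
        ∪ (C \ A.image (relabelFun (Finset.Icc 1 (p+q)) C)) = C :=
      Finset.union_sdiff_of_subset hsub
    refine Prod.ext ?_ hCeq
    simp only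
    rw [hCeq, relabel_image_image_inv hccard hA1]
  · rintro ⟨A, B⟩ hz
    simp only [midIdx, Finset.mem_filter, Finset.mem_product, Finset.mem_powerset] at hz
    obtain ⟨⟨hA1, hB1⟩, hA2, hB2, hdisj⟩ := hz
    have hucard : (A ∪ B).card = (Finset.Icc 1 (p+q)).card := by
      rw [Finset.card_union_of_disjoint hdisj, card_Icc_one, hA2, hB2]
    have h5 : (A.image (relabelFun (A ∪ B) (Finset.Icc 1 (p+q)))).image
        (relabelFun (Finset.Icc 1 (p+q)) (A ∪ B)) = A :=
      relabel_image_image_inv hucard Finset.subset_union_left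
    refine Prod.ext ?_ ?_
    · simpa using h5
    · simp only
      rw [h5, Finset.union_sdiff_cancel_left hdisj]
  · rintro ⟨A, C⟩ hz
    rfl


lemma rhs_eq (p q r : ℕ) (P Q R' : SC) (hP : IsSetComp p P) (hQ : IsSetComp q Q)
    (hR : IsSetComp r R') :
    hatL ℤ (Finsupp.single P 1) (hatL ℤ (Finsupp.single Q 1) (Finsupp.single R' 1))
      = ∑ z ∈ midIdx p q r, midF p q r P Q R' z := by
  have hmP : maxG P = p := maxG_of_ground hP.2.2
  have hmQ : maxG Q = q := maxG_of_ground hQ.2.2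
  have hmR : maxG R' = r := maxG_of_ground hR.2.2
  have hQsub : ∀ B ∈ Q, B ⊆ Finset.Icc 1 q := fun B hB => hQ.2.2 ▸ subset_ground hB
  have hRsub : ∀ B ∈ R', B ⊆ Finset.Icc 1 r := fun B hB => hR.2.2 ▸ subset_ground hB
  have hPsub : ∀ B ∈ P, B ⊆ Finset.Icc 1 p := fun B hB => hP.2.2 ▸ subset_ground hB
  rw [hatL_single]
  conv_lhs => rw [hatB]
  rw [hmQ, hmR, map_sum]
  have step : ∀ C ∈ (Finset.Icc 1 (q+r)).powerset.filter (fun C => C.card = q),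
      (hatL ℤ (Finsupp.single P 1)) (Finsupp.single (relabelSC (Finset.Icc 1 q) C Q ++
          relabelSC (Finset.Icc 1 r) (Finset.Icc 1 (q+r) \ C) R') 1)
      = ∑ A ∈ (Finset.Icc 1 (p+q+r)).powerset.filter (fun A => A.card = p),
          midF p q r P Q R'
            (A, C.image (relabelFun (Finset.Icc 1 (q+r)) (Finset.Icc 1 (p+q+r) \ A))) := by
    intro C hC
    simp only [Finset.mem_filter, Finset.mem_powerset] at hC
    have hW := hatB_term_isComp hQ hR hC.1 hC.2
    have hmW := maxG_of_ground hW.2.2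
    rw [hatL_single]
    unfold hatB
    rw [hmW, hmP, ← Nat.add_assoc]
    apply Finset.sum_congr rfl
    intro A hA
    simp only [Finset.mem_filter, Finset.mem_powerset] at hA
    have hdcard : (Finset.Icc 1 (q+r)).card = (Finset.Icc 1 (p+q+r) \ A).card := by
      rw [card_Icc_one, Finset.card_sdiff_of_subset hA.1, card_Icc_one, hA.2]; omega
    have hinj := (relabelFun_strictMonoOn hdcard).injOn
    have h1 : relabelSC (Finset.Icc 1 (q+r)) (Finset.Icc 1 (p+q+r) \ A)
          (relabelSC (Finset.Icc 1 q) C Q)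
        = relabelSC (Finset.Icc 1 q)
            (C.image (relabelFun (Finset.Icc 1 (q+r)) (Finset.Icc 1 (p+q+r) \ A))) Q :=
      relabelSC_comp (by rw [card_Icc_one, hC.2]) hdcard hC.1 hQsub
    have h2 : relabelSC (Finset.Icc 1 (q+r)) (Finset.Icc 1 (p+q+r) \ A)
          (relabelSC (Finset.Icc 1 r) (Finset.Icc 1 (q+r) \ C) R')
        = relabelSC (Finset.Icc 1 r)
            ((Finset.Icc 1 (q+r) \ C).image
              (relabelFun (Finset.Icc 1 (q+r)) (Finset.Icc 1 (p+q+r) \ A))) R' :=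
      relabelSC_comp (by rw [card_Icc_one, Finset.card_sdiff_of_subset hC.1, card_Icc_one, hC.2]; omega)
        hdcard Finset.sdiff_subset hRsub
    have h3 : (Finset.Icc 1 (q+r) \ C).image
          (relabelFun (Finset.Icc 1 (q+r)) (Finset.Icc 1 (p+q+r) \ A))
        = (Finset.Icc 1 (p+q+r) \ A)
            \ C.image (relabelFun (Finset.Icc 1 (q+r)) (Finset.Icc 1 (p+q+r) \ A)) := by
      rw [image_sdiff_of_injOn hC.1 hinj, relabelFun_image hdcard]
    rw [relabelSC_append, h1, h2, h3, midF]
  rw [Finset.sum_congr rfl step, ← Finset.sum_product']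
  apply Finset.sum_nbij'
    (i := fun z => (z.2, z.1.image (relabelFun (Finset.Icc 1 (q+r)) (Finset.Icc 1 (p+q+r) \ z.2))))
    (j := fun z => (z.2.image (relabelFun (Finset.Icc 1 (p+q+r) \ z.1) (Finset.Icc 1 (q+r))), z.1))
  · rintro ⟨C, A⟩ hz
    simp only [Finset.mem_product, Finset.mem_filter, Finset.mem_powerset] at hz
    obtain ⟨⟨hC1, hC2⟩, hA1, hA2⟩ := hz
    have hdcard : (Finset.Icc 1 (q+r)).card = (Finset.Icc 1 (p+q+r) \ A).card := by
      rw [card_Icc_one, Finset.card_sdiff_of_subset hA1, card_Icc_one, hA2]; omega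
    have hsub : C.image (relabelFun (Finset.Icc 1 (q+r)) (Finset.Icc 1 (p+q+r) \ A))
        ⊆ Finset.Icc 1 (p+q+r) \ A := relabel_image_subset hdcard hC1
    simp only [midIdx, Finset.mem_filter, Finset.mem_product, Finset.mem_powerset]
    refine ⟨⟨hA1, hsub.trans Finset.sdiff_subset⟩, hA2, ?_, ?_⟩
    · rw [relabel_image_card hdcard hC1, hC2]
    · exact Finset.disjoint_of_subset_right hsub Finset.disjoint_sdiff
  · rintro ⟨A, B⟩ hz
    simp only [midIdx, Finset.mem_filter, Finset.mem_product, Finset.mem_powerset] at hz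
    obtain ⟨⟨hA1, hB1⟩, hA2, hB2, hdisj⟩ := hz
    have hdcard : (Finset.Icc 1 (p+q+r) \ A).card = (Finset.Icc 1 (q+r)).card := by
      rw [card_Icc_one, Finset.card_sdiff_of_subset hA1, card_Icc_one, hA2]; omega
    have hBsub : B ⊆ Finset.Icc 1 (p+q+r) \ A :=
      Finset.subset_sdiff.2 ⟨hB1, hdisj.symm⟩
    simp only [Finset.mem_product, Finset.mem_filter, Finset.mem_powerset]
    refine ⟨⟨relabel_image_subset hdcard hBsub, ?_⟩, hA1, hA2⟩
    · rw [relabel_image_card hdcard hBsub, hB2]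
  · rintro ⟨C, A⟩ hz
    simp only [Finset.mem_product, Finset.mem_filter, Finset.mem_powerset] at hz
    obtain ⟨⟨hC1, hC2⟩, hA1, hA2⟩ := hz
    have hdcard : (Finset.Icc 1 (q+r)).card = (Finset.Icc 1 (p+q+r) \ A).card := by
      rw [card_Icc_one, Finset.card_sdiff_of_subset hA1, card_Icc_one, hA2]; omega
    refine Prod.ext ?_ rfl
    simp only
    rw [relabel_image_image_inv hdcard hC1]
  · rintro ⟨A, B⟩ hz
    simp only [midIdx, Finset.mem_filter, Finset.mem_product, Finset.mem_powerset] at hz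
    obtain ⟨⟨hA1, hB1⟩, hA2, hB2, hdisj⟩ := hz
    have hdcard : (Finset.Icc 1 (p+q+r) \ A).card = (Finset.Icc 1 (q+r)).card := by
      rw [card_Icc_one, Finset.card_sdiff_of_subset hA1, card_Icc_one, hA2]; omega
    have hBsub : B ⊆ Finset.Icc 1 (p+q+r) \ A :=
      Finset.subset_sdiff.2 ⟨hB1, hdisj.symm⟩
    refine Prod.ext rfl ?_
    simp only
    rw [relabel_image_image_inv hdcard hBsub]
  · rintro ⟨C, A⟩ hz
    rfl


/-- **Theorem.** `(T_•, ∗̂)` is a graded associative unital algebra with unit the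
empty set composition; in particular `(P ∗̂ Q) ∗̂ R = P ∗̂ (Q ∗̂ R)` for all set
compositions `P, Q, R`. -/
theorem symmetrized_product_algebra :
    (∀ (p q : ℕ) (P Q : SC), IsSetComp p P → IsSetComp q Q →
        hatL ℤ (Finsupp.single P 1) (Finsupp.single Q 1) ∈ Submodule.span ℤ
          {f : FM ℤ | ∃ U : SC, IsSetComp (p + q) U ∧ f = Finsupp.single U 1}) ∧
    (∀ (p q r : ℕ) (P Q R' : SC), IsSetComp p P → IsSetComp q Q → IsSetComp r R' →
        hatL ℤ (hatL ℤ (Finsupp.single P 1) (Finsupp.single Q 1)) (Finsupp.single R' 1) =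
          hatL ℤ (Finsupp.single P 1) (hatL ℤ (Finsupp.single Q 1) (Finsupp.single R' 1))) ∧
    (∀ x y z : FM ℤ, x ∈ Tspan ℤ → y ∈ Tspan ℤ → z ∈ Tspan ℤ →
        hatL ℤ (hatL ℤ x y) z = hatL ℤ x (hatL ℤ y z)) ∧
    (∀ x : FM ℤ, x ∈ Tspan ℤ →
        hatL ℤ (Finsupp.single ([] : SC) 1) x = x ∧
        hatL ℤ x (Finsupp.single ([] : SC) 1) = x) := by
  have part2 : ∀ (p q r : ℕ) (P Q R' : SC), IsSetComp p P → IsSetComp q Q → IsSetComp r R' →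
      hatL ℤ (hatL ℤ (Finsupp.single P 1) (Finsupp.single Q 1)) (Finsupp.single R' 1) =
        hatL ℤ (Finsupp.single P 1) (hatL ℤ (Finsupp.single Q 1) (Finsupp.single R' 1)) :=
    fun p q r P Q R' hP hQ hR =>
      (lhs_eq p q r P Q R' hP hQ hR).trans (rhs_eq p q r P Q R' hP hQ hR).symm
  have assoc3 : ∀ x, x ∈ Tspan ℤ → ∀ y, y ∈ Tspan ℤ → ∀ z, z ∈ Tspan ℤ →
      hatL ℤ (hatL ℤ x y) z = hatL ℤ x (hatL ℤ y z) := by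
    intro x hx
    refine Submodule.span_induction (p := fun x _ => ∀ y, y ∈ Tspan ℤ → ∀ z, z ∈ Tspan ℤ →
      hatL ℤ (hatL ℤ x y) z = hatL ℤ x (hatL ℤ y z)) ?_ ?_ ?_ ?_ hx
    · rintro f ⟨n, P, hP, rfl⟩ y hy
      refine Submodule.span_induction (p := fun y _ => ∀ z, z ∈ Tspan ℤ →
        hatL ℤ (hatL ℤ (Finsupp.single P 1) y) z
          = hatL ℤ (Finsupp.single P 1) (hatL ℤ y z)) ?_ ?_ ?_ ?_ hy
      · rintro g ⟨m, Q, hQ, rfl⟩ z hz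
        refine Submodule.span_induction (p := fun z _ =>
          hatL ℤ (hatL ℤ (Finsupp.single P 1) (Finsupp.single Q 1)) z
            = hatL ℤ (Finsupp.single P 1) (hatL ℤ (Finsupp.single Q 1) z)) ?_ ?_ ?_ ?_ hz
        · rintro h ⟨k, R', hR, rfl⟩
          exact part2 n m k P Q R' hP hQ hR
        · simp
        · intro a b _ _ h1 h2
          simp only [map_add, LinearMap.add_apply]
          rw [h1, h2]
        · intro c a _ h1
          simp only [map_smul, LinearMap.smul_apply]
          rw [h1]
      · simp
      · intro a b _ _ h1 h2 z hz
        simp only [map_add, LinearMap.add_apply]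
        rw [h1 z hz, h2 z hz]
      · intro c a _ h1 z hz
        simp only [map_smul, LinearMap.smul_apply]
        rw [h1 z hz]
    · intro y hy z hz
      simp
    · intro a b _ _ h1 h2 y hy z hz
      simp only [map_add, LinearMap.add_apply]
      rw [h1 y hy z hz, h2 y hy z hz]
    · intro c a _ h1 y hy z hz
      simp only [map_smul, LinearMap.smul_apply]
      rw [h1 y hy z hz]
  have unit : ∀ x, x ∈ Tspan ℤ →
      hatL ℤ (Finsupp.single ([] : SC) 1) x = x ∧
      hatL ℤ x (Finsupp.single ([] : SC) 1) = x := by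
    intro x hx
    refine Submodule.span_induction (p := fun x _ =>
      hatL ℤ (Finsupp.single ([] : SC) 1) x = x ∧
      hatL ℤ x (Finsupp.single ([] : SC) 1) = x) ?_ ?_ ?_ ?_ hx
    · rintro f ⟨n, P, hP, rfl⟩
      exact ⟨(hatL_single _ _).trans (hatB_nil_left hP),
        (hatL_single _ _).trans (hatB_nil_right hP)⟩
    · simp
    · intro a b _ _ h1 h2
      simp only [map_add, LinearMap.add_apply]
      rw [h1.1, h2.1, h1.2, h2.2]
      exact ⟨rfl, rfl⟩
    · intro c a _ h1
      simp only [map_smul, LinearMap.smul_apply]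
      rw [h1.1, h1.2]
      exact ⟨rfl, rfl⟩
  exact ⟨part1, part2, fun x y z hx hy hz => assoc3 x hx y hy z hz, unit⟩
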